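/- Let k' be the size of the minimal (greedy) 1-factorization of P and let k be the common size of the factorizations in the 1-collection of P, P_e, P_o. Then k ≤ min(3k' − 2, m). -/

import Mathlib

/-- The map φ on strings of length m (strings modelled as functions ℕ → α). -/
def phi {α : Type*} (m : ℕ) (S : ℕ → α) : ℕ → α :=
  fun i => if m / 2 * 2 ≤ i then S i else if i % 2 = 1 then S (i - 1) else S (i + 1)

/-- P_o = φ(P). -/
def Po {α : Type*} (P : ℕ → α) (m : ℕ) : ℕ → α := phi m P

/-- P_e = P[0]·φ(P[1..m-1]). -/
def Pe {α : Type*} (P : ℕ → α) (m : ℕ) : ℕ → α :=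
  fun j => if j = 0 then P 0 else phi (m - 1) (fun t => P (t + 1)) (j - 1)

/-- 1-len(S,s) for a string S of length m: the greatest i ≤ m - s such that the
characters S[s..s+i-1] are pairwise distinct. -/
def oneLenF {α : Type*} [DecidableEq α] (S : ℕ → α) (m s : ℕ) : ℕ :=
  Nat.findGreatest (fun i => ((List.range i).map (fun t => S (s + t))).Nodup) (m - s)

/-- Number of factors of the factorization of a length-m string obtained by repeatedly
taking a factor of length `f s` at position s. (For the factorizations considered here
`f s ≥ 1` whenever `s < m`, so `max 1` is redundant but makes termination evident.) -/
def kWith (f : ℕ → ℕ) (m : ℕ) (s : ℕ) : ℕ :=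
  if h : s < m then kWith f m (s + max 1 (f s)) + 1 else 0
termination_by m - s
decreasing_by
  have := le_max_left 1 (f s)
  omega

/-! ### Auxiliary machinery -/

/-- The permutation underlying `phi`. -/
def sigmaFn (m j : ℕ) : ℕ := if m / 2 * 2 ≤ j then j else if j % 2 = 1 then j - 1 else j + 1

/-- The permutation underlying `Pe`. -/
def tauFn (m j : ℕ) : ℕ := if j = 0 then 0 else sigmaFn (m - 1) (j - 1) + 1

lemma phi_eq {α : Type*} (m : ℕ) (S : ℕ → α) (i : ℕ) : phi m S i = S (sigmaFn m i) := by
  simp only [phi, sigmaFn]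
  split_ifs <;> rfl

lemma Po_eq {α : Type*} (P : ℕ → α) (m j : ℕ) : Po P m j = P (sigmaFn m j) := phi_eq m P j

lemma Pe_eq {α : Type*} (P : ℕ → α) (m j : ℕ) : Pe P m j = P (tauFn m j) := by
  simp only [Pe, tauFn]
  split_ifs with h
  · rfl
  · rw [phi_eq]

lemma sigma_inj {m j1 j2 : ℕ} (h : sigmaFn m j1 = sigmaFn m j2) : j1 = j2 := by
  simp only [sigmaFn] at h
  split_ifs at h <;> omega

lemma sigma_ge (m j : ℕ) : j ≤ sigmaFn m j + 1 := by
  simp only [sigmaFn]; split_ifs <;> omega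

lemma sigma_le (m j : ℕ) : sigmaFn m j ≤ j + 1 := by
  simp only [sigmaFn]; split_ifs <;> omega

lemma sigma_lt {m j : ℕ} (h : j < m) : sigmaFn m j < m := by
  simp only [sigmaFn]; split_ifs <;> omega

lemma tau_inj {m j1 j2 : ℕ} (h : tauFn m j1 = tauFn m j2) : j1 = j2 := by
  unfold tauFn at h
  by_cases h1 : j1 = 0 <;> by_cases h2 : j2 = 0
  · omega
  · rw [if_pos h1, if_neg h2] at h; omega
  · rw [if_neg h1, if_pos h2] at h; omega
  · rw [if_neg h1, if_neg h2] at h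
    have := sigma_inj (m := m - 1) (j1 := j1 - 1) (j2 := j2 - 1) (by omega)
    omega

lemma tau_ge (m j : ℕ) : j ≤ tauFn m j + 1 := by
  simp only [tauFn]
  split_ifs with h
  · omega
  · have := sigma_ge (m - 1) (j - 1); omega

lemma tau_le (m j : ℕ) : tauFn m j ≤ j + 1 := by
  simp only [tauFn]
  split_ifs with h
  · omega
  · have := sigma_le (m - 1) (j - 1); omega

lemma tau_lt {m j : ℕ} (h : j < m) : tauFn m j < m := by
  simp only [tauFn]
  split_ifs with h1
  · omega
  · have := sigma_lt (m := m - 1) (j := j - 1) (by omega); omega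

/-- Pairwise distinctness of `P` on the window `[a, a+n)`. -/
def Dst {α : Type*} (P : ℕ → α) (a n : ℕ) : Prop :=
  ∀ i1 i2, i1 < n → i2 < n → P (a + i1) = P (a + i2) → i1 = i2

lemma nodup_iff_dst {α : Type*} [DecidableEq α] (P : ℕ → α) (a n : ℕ) :
    ((List.range n).map (fun t => P (a + t))).Nodup ↔ Dst P a n := by
  constructor
  · intro h i1 i2 h1 h2 he
    exact List.inj_on_of_nodup_map h (List.mem_range.2 h1) (List.mem_range.2 h2) he
  · intro h
    refine List.Nodup.map_on ?_ (List.nodup_range (n := n))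
    intro x hx y hy hxy
    exact h x y (List.mem_range.1 hx) (List.mem_range.1 hy) hxy

lemma oneLenF_le {α : Type*} [DecidableEq α] (S : ℕ → α) (m s : ℕ) :
    oneLenF S m s ≤ m - s := Nat.findGreatest_le _

lemma le_oneLenF {α : Type*} [DecidableEq α] {S : ℕ → α} {m s i : ℕ}
    (h1 : i ≤ m - s) (h2 : Dst S s i) : i ≤ oneLenF S m s :=
  Nat.le_findGreatest h1 ((nodup_iff_dst S s i).2 h2)

lemma oneLenF_dst {α : Type*} [DecidableEq α] (S : ℕ → α) (m s : ℕ) :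
    Dst S s (oneLenF S m s) := by
  have h0 : ((List.range 0).map (fun t => S (s + t))).Nodup := by simp
  have hsp := Nat.findGreatest_spec
    (P := fun i => ((List.range i).map (fun t => S (s + t))).Nodup)
    (n := m - s) (Nat.zero_le _) h0
  exact (nodup_iff_dst S s _).1 hsp

lemma one_le_oneLenF {α : Type*} [DecidableEq α] (S : ℕ → α) {m s : ℕ} (h : s < m) :
    1 ≤ oneLenF S m s :=
  le_oneLenF (by omega) (fun i1 i2 h1 h2 _ => by omega)

lemma dst_shift {α : Type*} {P : ℕ → α} {a n b k : ℕ} (h : Dst P a n) (hab : a ≤ b)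
    (hk : b + k ≤ a + n) : Dst P b k := by
  intro i1 i2 h1 h2 he
  have := h (b - a + i1) (b - a + i2) (by omega) (by omega) (by
    have e1 : a + (b - a + i1) = b + i1 := by omega
    have e2 : a + (b - a + i2) = b + i2 := by omega
    rw [e1, e2]; exact he)
  omega

lemma end_mono {α : Type*} [DecidableEq α] (P : ℕ → α) (m : ℕ) {s t : ℕ} (hst : s ≤ t) :
    s + oneLenF P m s ≤ t + oneLenF P m t := by
  by_cases h : s + oneLenF P m s ≤ t
  · omega
  · have hL := oneLenF_le P m s
    have hd := oneLenF_dst P m s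
    have h2 : s + oneLenF P m s - t ≤ oneLenF P m t :=
      le_oneLenF (by omega) (dst_shift hd hst (by omega))
    omega

/-- Key transfer lemma: if `Q = P ∘ π` with `π` injective, moving indices by at most 1
and mapping `[0,m)` into itself, then the 1-len of `Q` at `s` is controlled by the
greedy window of `P` starting at `s - 1`. -/
lemma oneLen_comp_ge {α : Type*} [DecidableEq α] (P Q : ℕ → α) (m : ℕ) (π : ℕ → ℕ)
    (hQ : ∀ j, Q j = P (π j)) (hinj : ∀ j1 j2, π j1 = π j2 → j1 = j2)
    (hge : ∀ j, j ≤ π j + 1) (hle : ∀ j, π j ≤ j + 1) (hlt : ∀ j, j < m → π j < m)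
    {s : ℕ} (hs : s < m) :
    (s - 1) + oneLenF P m (s - 1) - 1 - s ≤ oneLenF Q m s ∧
    ((s - 1) + oneLenF P m (s - 1) = m → m - s ≤ oneLenF Q m s) := by
  set a := s - 1 with ha
  have hdP : Dst P a (oneLenF P m a) := oneLenF_dst P m a
  have hLle := oneLenF_le P m a
  set e := a + oneLenF P m a with he
  have hse : s ≤ e := by
    have : 1 ≤ oneLenF P m a := one_le_oneLenF P (by omega)
    omega
  have hem : e ≤ m := by omega
  constructor
  · apply le_oneLenF (by omega)
    intro i1 i2 h1 h2 heq
    rw [hQ, hQ] at heq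
    have hx1 : a ≤ π (s + i1) := by have := hge (s + i1); omega
    have hx1' : π (s + i1) < e := by have := hle (s + i1); omega
    have hx2 : a ≤ π (s + i2) := by have := hge (s + i2); omega
    have hx2' : π (s + i2) < e := by have := hle (s + i2); omega
    have hd := hdP (π (s + i1) - a) (π (s + i2) - a) (by omega) (by omega) (by
      have e1 : a + (π (s + i1) - a) = π (s + i1) := by omega
      have e2 : a + (π (s + i2) - a) = π (s + i2) := by omega
      rw [e1, e2]; exact heq)
    have := hinj (s + i1) (s + i2) (by omega)
    omega
  · intro hem'
    apply le_oneLenF (by omega)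
    intro i1 i2 h1 h2 heq
    rw [hQ, hQ] at heq
    have hx1 : a ≤ π (s + i1) := by have := hge (s + i1); omega
    have hx1' : π (s + i1) < m := hlt _ (by omega)
    have hx2 : a ≤ π (s + i2) := by have := hge (s + i2); omega
    have hx2' : π (s + i2) < m := hlt _ (by omega)
    have hd := hdP (π (s + i1) - a) (π (s + i2) - a) (by omega) (by omega) (by
      have e1 : a + (π (s + i1) - a) = π (s + i1) := by omega
      have e2 : a + (π (s + i2) - a) = π (s + i2) := by omega
      rw [e1, e2]; exact heq)
    have := hinj (s + i1) (s + i2) (by omega)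
    omega

/-- The combined factor length at `s` is at least `end(s-1) - 1 - s`, and at least
`m - s` whenever `end(s-1) = m`. -/
lemma fmin_ge {α : Type*} [DecidableEq α] (P : ℕ → α) (m : ℕ) {s : ℕ} (hs : s < m) :
    ((s - 1) + oneLenF P m (s - 1) - 1 - s ≤
        min (oneLenF P m s) (min (oneLenF (Pe P m) m s) (oneLenF (Po P m) m s))) ∧
    ((s - 1) + oneLenF P m (s - 1) = m →
      m - s ≤ min (oneLenF P m s) (min (oneLenF (Pe P m) m s) (oneLenF (Po P m) m s))) := by
  have hPe := oneLen_comp_ge P (Pe P m) m (tauFn m) (Pe_eq P m) (fun _ _ => tau_inj)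
    (tau_ge m) (tau_le m) (fun _ h => tau_lt h) hs
  have hPo := oneLen_comp_ge P (Po P m) m (sigmaFn m) (Po_eq P m) (fun _ _ => sigma_inj)
    (sigma_ge m) (sigma_le m) (fun _ h => sigma_lt h) hs
  have hdP : Dst P (s - 1) (oneLenF P m (s - 1)) := oneLenF_dst P m (s - 1)
  have hLle := oneLenF_le P m (s - 1)
  set e := (s - 1) + oneLenF P m (s - 1) with he
  have hse : s ≤ e := by
    have : 1 ≤ oneLenF P m (s - 1) := one_le_oneLenF P (by omega)
    omega
  have hem : e ≤ m := by omega
  have hP : e - s ≤ oneLenF P m s :=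
    le_oneLenF (by omega) (dst_shift hdP (by omega) (by omega))
  constructor
  · simp only [le_min_iff]
    exact ⟨by omega, hPe.1, hPo.1⟩
  · intro hm'
    simp only [le_min_iff]
    exact ⟨by omega, hPe.2 hm', hPo.2 hm'⟩

/-! ### `kWith` basics -/

lemma kWith_pos (f : ℕ → ℕ) (m s : ℕ) (h : s < m) :
    kWith f m s = kWith f m (s + max 1 (f s)) + 1 := by
  rw [kWith]; rw [dif_pos h]

lemma kWith_neg (f : ℕ → ℕ) (m s : ℕ) (h : ¬ s < m) : kWith f m s = 0 := by
  rw [kWith]; rw [dif_neg h]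

lemma kWith_le (f : ℕ → ℕ) (m : ℕ) : ∀ n s, m - s ≤ n → kWith f m s ≤ m - s := by
  intro n
  induction n with
  | zero => intro s h; rw [kWith_neg _ _ _ (by omega)]; omega
  | succ n ih =>
    intro s h
    by_cases hs : s < m
    · rw [kWith_pos _ _ _ hs]
      have h1 : 1 ≤ max 1 (f s) := le_max_left _ _
      have := ih (s + max 1 (f s)) (by omega)
      omega
    · rw [kWith_neg _ _ _ hs]; omega

section Abstract

variable (f g : ℕ → ℕ) (m : ℕ)

lemma K_pos (hg1 : ∀ s, s < m → 1 ≤ g s) {s : ℕ} (h : s < m) :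
    kWith g m s = kWith g m (s + g s) + 1 := by
  rw [kWith_pos g m s h]
  congr 2
  have := hg1 s h
  omega

lemma K_one (hg1 : ∀ s, s < m → 1 ≤ g s) {s : ℕ} (h : s < m) : 1 ≤ kWith g m s := by
  rw [K_pos g m hg1 h]; omega

lemma K_mono (hg1 : ∀ s, s < m → 1 ≤ g s)
    (hgmono : ∀ s t, s ≤ t → s + g s ≤ t + g t) :
    ∀ n u t, u ≤ t → m - u ≤ n → kWith g m t ≤ kWith g m u := by
  intro n
  induction n with
  | zero =>
    intro u t hut h
    rw [kWith_neg _ _ u (by omega), kWith_neg _ _ t (by omega)]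
  | succ n ih =>
    intro u t hut h
    by_cases hu : u < m
    · have hgu := hg1 u hu
      rw [K_pos g m hg1 hu]
      by_cases hE : u + g u ≤ t
      · have := ih (u + g u) t hE (by omega)
        omega
      · by_cases ht : t < m
        · rw [K_pos g m hg1 ht]
          have hmono := hgmono u t hut
          have := ih (u + g u) (t + g t) (by omega) (by omega)
          omega
        · rw [kWith_neg _ _ t ht]; omega
    · rw [kWith_neg _ _ u hu, kWith_neg _ _ t (by omega)]

/-- Main induction: from any position `s ≥ 1`, the combined factorization uses at most
`3 K(s) - 1` factors, where `K(s)` is the number of greedy factors from `s`. -/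
lemma main_A (hg1 : ∀ s, s < m → 1 ≤ g s)
    (hgmono : ∀ s t, s ≤ t → s + g s ≤ t + g t)
    (hgle : ∀ s, g s ≤ m - s)
    (hf : ∀ s, s < m → ((s - 1) + g (s - 1) - 1 - s ≤ f s ∧
      ((s - 1) + g (s - 1) = m → m - s ≤ f s))) :
    ∀ n s, m - s ≤ n → 1 ≤ s → s < m →
      kWith f m s ≤ 3 * kWith g m s - 1 := by
  intro n
  induction n with
  | zero => intro s h h1 h2; omega
  | succ n ih =>
    intro s h hs1 hsm
    have hKs : 1 ≤ kWith g m s := K_one g m hg1 hsm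
    have hKsE : kWith g m s = kWith g m (s + g s) + 1 := K_pos g m hg1 hsm
    set E := s + g s with hE
    have hEle : E ≤ m := by have := hgle s; omega
    have hEgt : s < E := by have := hg1 s hsm; omega
    obtain ⟨hfa, hfb⟩ := hf s hsm
    set e := (s - 1) + g (s - 1) with he
    have hee : e ≤ E := by
      have := hgmono (s - 1) s (by omega); omega
    set s1 := s + max 1 (f s) with hs1def
    have hN : kWith f m s = kWith f m s1 + 1 := kWith_pos f m s hsm
    have hs1gt : s + 1 ≤ s1 := by have := le_max_left 1 (f s); omega
    by_cases hem : e = m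
    · -- the whole rest is one factor
      have : m ≤ s1 := by have := hfb hem; have := le_max_right 1 (f s); omega
      rw [hN, kWith_neg f m s1 (by omega)]
      omega
    · have hs1ge : e - 1 ≤ s1 := by have := le_max_right 1 (f s); omega
      by_cases hc1 : E ≤ s1
      · -- one combined factor covers the greedy factor
        by_cases hs1m : s1 < m
        · have hN1 := ih s1 (by omega) (by omega) hs1m
          have hK1 : kWith g m s1 ≤ kWith g m E :=
            K_mono g m hg1 hgmono m E s1 hc1 (by omega)
          have hK1' : 1 ≤ kWith g m s1 := K_one g m hg1 hs1m
          omega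
        · rw [hN, kWith_neg f m s1 hs1m]; omega
      · -- s1 still inside the greedy factor [s, E)
        push_neg at hc1
        have hs1m : s1 < m := by omega
        obtain ⟨hfa1, hfb1⟩ := hf s1 hs1m
        set e1 := (s1 - 1) + g (s1 - 1) with he1
        have he1E : E ≤ e1 := by
          have := hgmono s (s1 - 1) (by omega); omega
        set s2 := s1 + max 1 (f s1) with hs2def
        have hN1 : kWith f m s1 = kWith f m s2 + 1 := kWith_pos f m s1 hs1m
        have hs2gt : s1 + 1 ≤ s2 := by have := le_max_left 1 (f s1); omega
        by_cases hem1 : e1 = m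
        · have : m ≤ s2 := by have := hfb1 hem1; have := le_max_right 1 (f s1); omega
          rw [hN, hN1, kWith_neg f m s2 (by omega)]
          omega
        · have hs2ge : e1 - 1 ≤ s2 := by have := le_max_right 1 (f s1); omega
          have he1m : e1 < m := by
            have := hgle (s1 - 1); omega
          have hEm : E < m := by omega
          have hKE : 1 ≤ kWith g m E := K_one g m hg1 hEm
          by_cases hc2 : E ≤ s2
          · by_cases hs2m : s2 < m
            · have hN2 := ih s2 (by omega) (by omega) hs2m
              have hK2 : kWith g m s2 ≤ kWith g m E :=
                K_mono g m hg1 hgmono m E s2 hc2 (by omega)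
              have hK2' : 1 ≤ kWith g m s2 := K_one g m hg1 hs2m
              omega
            · rw [hN, hN1, kWith_neg f m s2 hs2m]; omega
          · -- s2 = E - 1
            push_neg at hc2
            have hs2eq : s2 = E - 1 := by omega
            have hs2m : s2 < m := by omega
            set s3 := s2 + max 1 (f s2) with hs3def
            have hN2 : kWith f m s2 = kWith f m s3 + 1 := kWith_pos f m s2 hs2m
            have hs3ge : E ≤ s3 := by have := le_max_left 1 (f s2); omega
            by_cases hs3m : s3 < m
            · have hN3 := ih s3 (by omega) (by omega) hs3m
              have hK3 : kWith g m s3 ≤ kWith g m E :=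
                K_mono g m hg1 hgmono m E s3 hs3ge (by omega)
              have hK3' : 1 ≤ kWith g m s3 := K_one g m hg1 hs3m
              omega
            · rw [hN, hN1, hN2, kWith_neg f m s3 hs3m]; omega

lemma main_B (hm : 1 ≤ m) (hg1 : ∀ s, s < m → 1 ≤ g s)
    (hgmono : ∀ s t, s ≤ t → s + g s ≤ t + g t)
    (hgle : ∀ s, g s ≤ m - s)
    (hf : ∀ s, s < m → ((s - 1) + g (s - 1) - 1 - s ≤ f s ∧
      ((s - 1) + g (s - 1) = m → m - s ≤ f s))) :
    kWith f m 0 ≤ 3 * kWith g m 0 - 2 := by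
  have h0 : (0 : ℕ) < m := hm
  obtain ⟨hfa, hfb⟩ := hf 0 h0
  have hsimp : (0 : ℕ) - 1 = 0 := rfl
  rw [hsimp] at hfa hfb
  set e0 := g 0 with he0
  have hfa' : e0 - 1 ≤ f 0 := by omega
  have he0le : e0 ≤ m := by have := hgle 0; omega
  have he0ge : 1 ≤ e0 := hg1 0 h0
  have hK0 : kWith g m 0 = kWith g m e0 + 1 := by
    have := K_pos g m hg1 h0; simpa using this
  set s1 := 0 + max 1 (f 0) with hs1def
  have hN : kWith f m 0 = kWith f m s1 + 1 := kWith_pos f m 0 h0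
  have hs1gt : 1 ≤ s1 := by have := le_max_left 1 (f 0); omega
  by_cases hem : e0 = m
  · have : m ≤ s1 := by have := hfb (by omega); have := le_max_right 1 (f 0); omega
    rw [hN, kWith_neg f m s1 (by omega)]
    have : kWith g m e0 = 0 := kWith_neg g m e0 (by omega)
    omega
  · have he0m : e0 < m := by omega
    have hKe0 : 1 ≤ kWith g m e0 := K_one g m hg1 he0m
    have hs1ge : e0 - 1 ≤ s1 := by have := le_max_right 1 (f 0); omega
    by_cases hc1 : e0 ≤ s1
    · by_cases hs1m : s1 < m
      · have hN1 := main_A f g m hg1 hgmono hgle hf m s1 (by omega) (by omega) hs1m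
        have hK1 : kWith g m s1 ≤ kWith g m e0 :=
          K_mono g m hg1 hgmono m e0 s1 hc1 (by omega)
        have hK1' : 1 ≤ kWith g m s1 := K_one g m hg1 hs1m
        omega
      · rw [hN, kWith_neg f m s1 hs1m]; omega
    · push_neg at hc1
      have hs1eq : s1 = e0 - 1 := by omega
      have hs1m : s1 < m := by omega
      set s2 := s1 + max 1 (f s1) with hs2def
      have hN1 : kWith f m s1 = kWith f m s2 + 1 := kWith_pos f m s1 hs1m
      have hs2ge : e0 ≤ s2 := by have := le_max_left 1 (f s1); omega
      by_cases hs2m : s2 < m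
      · have hN2 := main_A f g m hg1 hgmono hgle hf m s2 (by omega) (by omega) hs2m
        have hK2 : kWith g m s2 ≤ kWith g m e0 :=
          K_mono g m hg1 hgmono m e0 s2 hs2ge (by omega)
        have hK2' : 1 ≤ kWith g m s2 := K_one g m hg1 hs2m
        omega
      · rw [hN, hN1, kWith_neg f m s2 hs2m]; omega

end Abstract

/-- If k' is the size of the minimal (greedy) 1-factorization of P and k
is the common size of the factorizations in the 1-collection of P, P_e, P_o, then
k ≤ min(3k' − 2, m). -/
theorem one_collection_size_bound {α : Type*} [DecidableEq α] (P : ℕ → α) (m : ℕ)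
    (hm : 1 ≤ m) :
    kWith (fun s => min (oneLenF P m s)
        (min (oneLenF (Pe P m) m s) (oneLenF (Po P m) m s))) m 0 ≤
      min (3 * kWith (fun s => oneLenF P m s) m 0 - 2) m := by
  refine le_min ?_ ?_
  · exact main_B _ _ m hm (fun s hs => one_le_oneLenF P hs)
      (fun s t hst => end_mono P m hst) (fun s => oneLenF_le P m s)
      (fun s hs => fmin_ge P m hs)
  · have := kWith_le (fun s => min (oneLenF P m s)
      (min (oneLenF (Pe P m) m s) (oneLenF (Po P m) m s))) m m 0 (by omega)
    omega
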